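/- arXiv:1608.02759 — 2 statements merged into one kernel-verified Lean document; each statement's English description precedes it below -/
import Mathlib

section
/- Assume the 2-point Chowla-type conjecture: for every A > 0 there is a constant C_A such that |Σ_{n ≤ x} μ(n+2) μ(n+1) exp(2πinα)| ≤ C_A x/(log x)^A holds for all x ≥ 2 uniformly in all real α. Then (1/x) Σ_{n ≤ x} (φ(n+3)/(n+3)) μ(n+2) μ(n+1) → 0 as x → ∞. -/
open Filter

noncomputable section

/-- The 2-point Chowla type conjecture: for every `A > 0`,
`∑_{n ≤ x} μ(n+2) μ(n+1) exp(2πinα) = O(x / (log x)^A)` uniformly in `α`. -/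
def TwoPointChowla : Prop :=
  ∀ A : ℝ, 0 < A → ∃ C : ℝ, ∀ x : ℝ, 2 ≤ x → ∀ α : ℝ,
    ‖(∑ n ∈ Finset.Icc 1 ⌊x⌋₊,
        ((ArithmeticFunction.moebius (n + 2) : ℤ) : ℂ) *
          ((ArithmeticFunction.moebius (n + 1) : ℤ) : ℂ) *
          Complex.exp (2 * (Real.pi : ℂ) * Complex.I * (n : ℂ) * (α : ℂ)))‖ ≤
      C * x / Real.log x ^ A

namespace Stmt13Aux

open Finset ArithmeticFunction Complex

lemma orth (d : ℕ) (hd : 0 < d) (m : ℕ) :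
    ∑ k ∈ Finset.range d, Complex.exp (2 * (Real.pi : ℂ) * Complex.I * m * k / d)
      = if d ∣ m then (d : ℂ) else 0 := by
  have hdC : (d : ℂ) ≠ 0 := Nat.cast_ne_zero.mpr hd.ne'
  have hpow : ∀ k : ℕ, Complex.exp (2 * (Real.pi : ℂ) * Complex.I * m * k / d)
      = Complex.exp (2 * (Real.pi : ℂ) * Complex.I * m / d) ^ k := by
    intro k
    rw [← Complex.exp_nat_mul]
    ring_nf
  simp only [hpow]
  by_cases h : d ∣ m
  · obtain ⟨c, rfl⟩ := h
    have : (2 * (Real.pi : ℂ) * Complex.I * (↑(d * c)) / d) = c * (2 * Real.pi * Complex.I) := by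
      push_cast
      field_simp
    rw [if_pos ⟨c, rfl⟩, this, Complex.exp_nat_mul, Complex.exp_two_pi_mul_I, one_pow]
    simp
  · rw [if_neg h]
    have hne : Complex.exp (2 * (Real.pi : ℂ) * Complex.I * m / d) ≠ 1 := by
      intro hone
      rw [Complex.exp_eq_one_iff] at hone
      obtain ⟨n, hn⟩ := hone
      apply h
      have hpi : (2 * (Real.pi : ℂ) * Complex.I) ≠ 0 := by
        simp [Real.pi_ne_zero, Complex.I_ne_zero]
      have hm : (m : ℂ) * (2 * (Real.pi : ℂ) * Complex.I) = ((n : ℂ) * d) * (2 * (Real.pi : ℂ) * Complex.I) := by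
        have h2 := congrArg (· * (d : ℂ)) hn
        field_simp at h2
        linear_combination (2 * (Real.pi : ℂ) * Complex.I) * h2
      have hm2 : (m : ℂ) = (n : ℂ) * d := mul_right_cancel₀ hpi hm
      have hmz : (m : ℤ) = n * d := by exact_mod_cast hm2
      have : (d : ℤ) ∣ (m : ℤ) := ⟨n, by rw [hmz]; ring⟩
      exact_mod_cast this
    rw [geom_sum_eq hne]
    have hpowd : Complex.exp (2 * (Real.pi : ℂ) * Complex.I * m / d) ^ d
        = Complex.exp (m * (2 * (Real.pi : ℂ) * Complex.I)) := by
      rw [← Complex.exp_nat_mul]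
      congr 1
      field_simp
    rw [hpowd]
    simp [Complex.exp_nat_mul_two_pi_mul_I]

lemma totient_div_eq (m : ℕ) (hm : 0 < m) :
    (Nat.totient m : ℝ) / m = ∑ d ∈ m.divisors, ((moebius d : ℤ) : ℝ) / d := by
  have key : ∀ n > 0, ∑ x ∈ n.divisorsAntidiagonal,
      ((moebius x.fst : ℤ) : ℝ) * (x.snd : ℝ) = (Nat.totient n : ℝ) := by
    rw [← ArithmeticFunction.sum_eq_iff_sum_mul_moebius_eq]
    intro n _
    exact_mod_cast congrArg (Nat.cast : ℕ → ℝ) (Nat.sum_totient n)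
  have h := key m hm
  rw [Nat.sum_divisorsAntidiagonal (f := fun d e => ((moebius d : ℤ) : ℝ) * (e : ℝ))] at h
  rw [← h, Finset.sum_div]
  refine Finset.sum_congr rfl fun d hd => ?_
  obtain ⟨hdvd, _⟩ := Nat.mem_divisors.mp hd
  have hd0 : 0 < d := Nat.pos_of_mem_divisors hd
  rw [Nat.cast_div hdvd (by exact_mod_cast hd0.ne')]
  field_simp

lemma count_le (d N : ℕ) (hd : 0 < d) :
    ((Finset.Icc 1 N).filter (fun n => d ∣ n + 3)).card ≤ (N + 3) / d := by
  have : ((Finset.Icc 1 N).filter (fun n => d ∣ n + 3)).card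
      ≤ (Finset.Icc 1 ((N + 3) / d)).card := by
    apply Finset.card_le_card_of_injOn (fun n => (n + 3) / d)
    · intro n hn
      simp only [Finset.mem_coe, Finset.mem_filter, Finset.mem_Icc] at hn ⊢
      obtain ⟨⟨h1, h2⟩, hdvd⟩ := hn
      constructor
      · rw [Nat.one_le_div_iff hd]; exact Nat.le_of_dvd (by omega) hdvd
      · exact Nat.div_le_div_right (by omega)
    · intro a ha b hb hab
      simp only [Finset.coe_filter, Set.mem_setOf_eq, Finset.mem_Icc] at ha hb
      simp only at hab
      have : a + 3 = b + 3 := by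
        rw [← Nat.div_mul_cancel ha.2, ← Nat.div_mul_cancel hb.2, hab]
      omega
  simpa using this

lemma tele' (D : ℕ) (hD : 0 < D) :
    ∀ M : ℕ, D ≤ M → ∑ d ∈ Finset.Ioc D M, (1 : ℝ) / (d : ℝ) ^ 2 ≤ 1 / D - 1 / M := by
  intro M
  induction M with
  | zero => intro h; omega
  | succ M ih =>
    intro hDM
    rcases Nat.lt_or_ge D (M + 1) with hlt | hge
    · have hDM' : D ≤ M := by omega
      rw [Finset.sum_Ioc_succ_top hDM']
      have hM1 : (1:ℝ) ≤ (M:ℝ) := by exact_mod_cast (by omega : 1 ≤ M)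
      have ihm := ih hDM'
      have key : (1:ℝ) / ((M:ℝ)+1)^2 ≤ 1/(M:ℝ) - 1/((M:ℝ)+1) := by
        rw [div_sub_div _ _ (by linarith) (by linarith), div_le_div_iff₀ (by positivity) (by positivity)]
        nlinarith
      push_cast
      linarith
    · have hDeq : D = M + 1 := by omega
      subst hDeq
      rw [Finset.Ioc_self, Finset.sum_empty]
      simp

lemma tele (D : ℕ) (hD : 0 < D) (M : ℕ) :
    ∑ d ∈ Finset.Ioc D M, (1 : ℝ) / (d : ℝ) ^ 2 ≤ 1 / D := by
  rcases Nat.lt_or_ge M D with h | h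
  · rw [Finset.Ioc_eq_empty (by omega), Finset.sum_empty]
    positivity
  · calc ∑ d ∈ Finset.Ioc D M, (1 : ℝ) / (d : ℝ) ^ 2 ≤ 1 / D - 1 / M := tele' D hD M h
      _ ≤ 1 / D := by
        have : (0:ℝ) ≤ 1 / M := by positivity
        linarith

lemma key_bound (C : ℝ)
    (hC : ∀ x : ℝ, 2 ≤ x → ∀ α : ℝ,
      ‖(∑ n ∈ Finset.Icc 1 ⌊x⌋₊,
        ((ArithmeticFunction.moebius (n + 2) : ℤ) : ℂ) *
          ((ArithmeticFunction.moebius (n + 1) : ℤ) : ℂ) *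
          Complex.exp (2 * (Real.pi : ℂ) * Complex.I * (n : ℂ) * (α : ℂ)))‖ ≤
      C * x / Real.log x ^ (2:ℝ))
    (d : ℕ) (hd : 0 < d) (x : ℝ) (hx : 2 ≤ x) :
    |∑ n ∈ (Finset.Icc 1 ⌊x⌋₊).filter (fun n => d ∣ n + 3),
        ((ArithmeticFunction.moebius (n + 2) : ℤ) : ℝ) *
          ((ArithmeticFunction.moebius (n + 1) : ℤ) : ℝ)|
      ≤ C * x / Real.log x ^ (2:ℝ) := by
  set N := ⌊x⌋₊ with hN
  set S : ℝ := ∑ n ∈ (Finset.Icc 1 N).filter (fun n => d ∣ n + 3),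
      ((ArithmeticFunction.moebius (n + 2) : ℤ) : ℝ) *
        ((ArithmeticFunction.moebius (n + 1) : ℤ) : ℝ) with hS
  have hdC : (d : ℂ) ≠ 0 := Nat.cast_ne_zero.mpr hd.ne'
  have hid : (d : ℂ) * (S : ℂ)
      = ∑ k ∈ Finset.range d, Complex.exp (2 * (Real.pi : ℂ) * Complex.I * 3 * (((k : ℝ) / d : ℝ) : ℂ)) *
          ∑ n ∈ Finset.Icc 1 N,
            ((ArithmeticFunction.moebius (n + 2) : ℤ) : ℂ) *
              ((ArithmeticFunction.moebius (n + 1) : ℤ) : ℂ) *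
              Complex.exp (2 * (Real.pi : ℂ) * Complex.I * (n : ℂ) * ((((k : ℝ) / d : ℝ)) : ℂ)) := by
    have hrhs : ∀ k ∈ Finset.range d, ∀ n ∈ Finset.Icc 1 N,
        Complex.exp (2 * (Real.pi : ℂ) * Complex.I * 3 * (((k : ℝ) / d : ℝ) : ℂ)) *
          (((ArithmeticFunction.moebius (n + 2) : ℤ) : ℂ) *
            ((ArithmeticFunction.moebius (n + 1) : ℤ) : ℂ) *
            Complex.exp (2 * (Real.pi : ℂ) * Complex.I * (n : ℂ) * ((((k : ℝ) / d : ℝ)) : ℂ)))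
        = ((ArithmeticFunction.moebius (n + 2) : ℤ) : ℂ) *
            ((ArithmeticFunction.moebius (n + 1) : ℤ) : ℂ) *
            Complex.exp (2 * (Real.pi : ℂ) * Complex.I * ((n + 3 : ℕ) : ℂ) * k / d) := by
      intro k _ n _
      rw [mul_comm, mul_assoc, ← Complex.exp_add]
      congr 2
      push_cast
      field_simp
    calc (d : ℂ) * (S : ℂ)
        = ∑ n ∈ Finset.Icc 1 N,
            ((ArithmeticFunction.moebius (n + 2) : ℤ) : ℂ) *
              ((ArithmeticFunction.moebius (n + 1) : ℤ) : ℂ) *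
              (if d ∣ n + 3 then (d : ℂ) else 0) := by
          rw [hS]
          push_cast
          rw [Finset.mul_sum, Finset.sum_filter]
          refine Finset.sum_congr rfl fun n _ => ?_
          by_cases h : d ∣ n + 3 <;> simp [h] <;> ring
      _ = ∑ n ∈ Finset.Icc 1 N,
            ((ArithmeticFunction.moebius (n + 2) : ℤ) : ℂ) *
              ((ArithmeticFunction.moebius (n + 1) : ℤ) : ℂ) *
              ∑ k ∈ Finset.range d, Complex.exp (2 * (Real.pi : ℂ) * Complex.I * ((n + 3 : ℕ) : ℂ) * k / d) := by
          refine Finset.sum_congr rfl fun n _ => ?_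
          rw [orth d hd (n + 3)]
      _ = _ := by
          simp only [Finset.mul_sum]
          rw [Finset.sum_comm]
          exact Finset.sum_congr rfl fun k hk => Finset.sum_congr rfl fun n hn =>
            (hrhs k hk n hn).symm
  have habs : (d : ℝ) * |S| ≤ (d : ℝ) * (C * x / Real.log x ^ (2:ℝ)) := by
    have h1 : (d : ℝ) * |S| = ‖(d : ℂ) * (S : ℂ)‖ := by
      rw [norm_mul, Complex.norm_natCast, Complex.norm_real, Real.norm_eq_abs]
    rw [h1, hid]
    calc ‖_‖ ≤ ∑ k ∈ Finset.range d, ‖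
          (Complex.exp (2 * (Real.pi : ℂ) * Complex.I * 3 * (((k : ℝ) / d : ℝ) : ℂ)) *
            ∑ n ∈ Finset.Icc 1 N,
              ((ArithmeticFunction.moebius (n + 2) : ℤ) : ℂ) *
                ((ArithmeticFunction.moebius (n + 1) : ℤ) : ℂ) *
                Complex.exp (2 * (Real.pi : ℂ) * Complex.I * (n : ℂ) * ((((k : ℝ) / d : ℝ)) : ℂ)))‖ :=
        norm_sum_le _ _
      _ ≤ ∑ k ∈ Finset.range d, C * x / Real.log x ^ (2:ℝ) := by
        refine Finset.sum_le_sum fun k _ => ?_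
        rw [norm_mul]
        have he : ‖Complex.exp (2 * (Real.pi : ℂ) * Complex.I * 3 * (((k : ℝ) / d : ℝ) : ℂ))‖ = 1 := by
          rw [Complex.norm_exp]
          norm_num [Complex.mul_re, Complex.mul_im]
        rw [he, one_mul]
        exact hC x hx ((k : ℝ) / d)
      _ = (d : ℝ) * (C * x / Real.log x ^ (2:ℝ)) := by
        rw [Finset.sum_const, Finset.card_range, nsmul_eq_mul]
  have hd' : (0:ℝ) < d := by exact_mod_cast hd
  calc |S| = ((d:ℝ) * |S|) / d := by field_simp
    _ ≤ ((d:ℝ) * (C * x / Real.log x ^ (2:ℝ))) / d := by gcongr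
    _ = C * x / Real.log x ^ (2:ℝ) := mul_div_cancel_left₀ _ hd'.ne'

lemma swap_sum (N : ℕ) (g f : ℕ → ℝ) :
    ∑ n ∈ Finset.Icc 1 N, (∑ d ∈ (n + 3).divisors, g d) * f n
      = ∑ d ∈ Finset.Icc 1 (N + 3), g d *
          ∑ n ∈ (Finset.Icc 1 N).filter (fun n => d ∣ n + 3), f n := by
  have hdiv : ∀ n ∈ Finset.Icc 1 N,
      (n + 3).divisors = (Finset.Icc 1 (N + 3)).filter (· ∣ n + 3) := by
    intro n hn
    rw [Finset.mem_Icc] at hn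
    ext d
    simp only [Nat.mem_divisors, Finset.mem_filter, Finset.mem_Icc]
    constructor
    · rintro ⟨hdvd, -⟩
      exact ⟨⟨Nat.pos_of_dvd_of_pos hdvd (by omega), le_trans (Nat.le_of_dvd (by omega) hdvd) (by omega)⟩, hdvd⟩
    · rintro ⟨-, hdvd⟩
      exact ⟨hdvd, by omega⟩
  calc ∑ n ∈ Finset.Icc 1 N, (∑ d ∈ (n + 3).divisors, g d) * f n
      = ∑ n ∈ Finset.Icc 1 N, ∑ d ∈ Finset.Icc 1 (N + 3),
          if d ∣ n + 3 then g d * f n else 0 := by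
        refine Finset.sum_congr rfl fun n hn => ?_
        rw [hdiv n hn, Finset.sum_filter, Finset.sum_mul]
        refine Finset.sum_congr rfl fun d _ => ?_
        by_cases h : d ∣ n + 3 <;> simp [h]
    _ = ∑ d ∈ Finset.Icc 1 (N + 3), ∑ n ∈ Finset.Icc 1 N,
          if d ∣ n + 3 then g d * f n else 0 := Finset.sum_comm
    _ = _ := by
        refine Finset.sum_congr rfl fun d _ => ?_
        rw [Finset.mul_sum, Finset.sum_filter]

end Stmt13Aux

open Stmt13Aux ArithmeticFunction in
theorem stmt_13 (hChowla : TwoPointChowla) :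
    Tendsto (fun x : ℝ => (1 / x) *
        ∑ n ∈ Finset.Icc 1 ⌊x⌋₊,
          ((Nat.totient (n + 3) : ℝ) / ((n : ℝ) + 3)) *
            ((ArithmeticFunction.moebius (n + 2) : ℤ) : ℝ) *
            ((ArithmeticFunction.moebius (n + 1) : ℤ) : ℝ))
      atTop (nhds 0) := by
  obtain ⟨C0, hC0⟩ := hChowla 2 (by norm_num)
  set C : ℝ := max C0 0 with hCdef
  have hCnn : 0 ≤ C := le_max_right _ _
  have hC : ∀ x : ℝ, 2 ≤ x → ∀ α : ℝ,
      ‖(∑ n ∈ Finset.Icc 1 ⌊x⌋₊,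
        ((ArithmeticFunction.moebius (n + 2) : ℤ) : ℂ) *
          ((ArithmeticFunction.moebius (n + 1) : ℤ) : ℂ) *
          Complex.exp (2 * (Real.pi : ℂ) * Complex.I * (n : ℂ) * (α : ℂ)))‖ ≤
      C * x / Real.log x ^ (2:ℝ) := by
    intro x hx α
    refine (hC0 x hx α).trans ?_
    have hlog : 0 < Real.log x := Real.log_pos (by linarith)
    have hfrac : (0:ℝ) ≤ x / Real.log x ^ (2:ℝ) := by positivity
    rw [mul_div_assoc, mul_div_assoc]
    exact mul_le_mul_of_nonneg_right (le_max_left C0 0) hfrac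
  -- the dominating function
  set h : ℝ → ℝ := fun x => C * (Real.log x + 1) / Real.log x ^ 2 + (x + 3) / (x * Real.log x)
    with hhdef
  apply squeeze_zero_norm' (a := h)
  · -- eventual bound
    filter_upwards [eventually_ge_atTop (3:ℝ)] with x hx3
    have hx2 : (2:ℝ) ≤ x := by linarith
    have hx0 : (0:ℝ) < x := by linarith
    have hlog1 : (1:ℝ) ≤ Real.log x := by
      rw [← Real.log_exp 1]
      exact Real.log_le_log (Real.exp_pos 1) ((Real.exp_one_lt_d9.le.trans (by norm_num)).trans hx3)
    have hlog0 : (0:ℝ) < Real.log x := by linarith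
    set N := ⌊x⌋₊ with hNdef
    have hNle : (N:ℝ) ≤ x := Nat.floor_le hx0.le
    have hNgt : x < (N:ℝ) + 1 := Nat.lt_floor_add_one x
    set D := ⌈Real.log x⌉₊ with hDdef
    have hD1 : 1 ≤ D := Nat.one_le_ceil_iff.mpr hlog0
    have hDlog : Real.log x ≤ (D:ℝ) := Nat.le_ceil _
    have hDle : (D:ℝ) ≤ Real.log x + 1 := (Nat.ceil_lt_add_one hlog0.le).le
    have hDN : D ≤ N + 3 := by
      have h1 : Real.log x ≤ x - 1 := Real.log_le_sub_one_of_pos hx0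
      have : (D:ℝ) ≤ (N:ℝ) + 3 := by linarith
      exact_mod_cast this
    -- rewrite summand using divisor sum
    have hsummand : ∀ n : ℕ,
        ((Nat.totient (n + 3) : ℝ) / ((n : ℝ) + 3)) *
            ((moebius (n + 2) : ℤ) : ℝ) * ((moebius (n + 1) : ℤ) : ℝ)
        = (∑ d ∈ (n + 3).divisors, ((moebius d : ℤ) : ℝ) / d) *
            (((moebius (n + 2) : ℤ) : ℝ) * ((moebius (n + 1) : ℤ) : ℝ)) := by
      intro n
      have : ((n:ℝ) + 3) = ((n + 3 : ℕ) : ℝ) := by push_cast; ring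
      rw [this, ← totient_div_eq (n + 3) (by omega)]
      ring
    have hswap := swap_sum N (fun d => ((moebius d : ℤ) : ℝ) / d)
      (fun n => ((moebius (n + 2) : ℤ) : ℝ) * ((moebius (n + 1) : ℤ) : ℝ))
    -- single-d sums
    set Sd : ℕ → ℝ := fun d => ∑ n ∈ (Finset.Icc 1 N).filter (fun n => d ∣ n + 3),
        ((moebius (n + 2) : ℤ) : ℝ) * ((moebius (n + 1) : ℤ) : ℝ) with hSddef
    have hStot : (∑ n ∈ Finset.Icc 1 N,
        ((Nat.totient (n + 3) : ℝ) / ((n : ℝ) + 3)) *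
            ((moebius (n + 2) : ℤ) : ℝ) * ((moebius (n + 1) : ℤ) : ℝ))
        = ∑ d ∈ Finset.Icc 1 (N + 3), (((moebius d : ℤ) : ℝ) / d) * Sd d := by
      rw [← hswap]
      exact Finset.sum_congr rfl fun n _ => hsummand n
    -- bound |Sd d| for small d
    have hsmall : ∀ d ∈ Finset.Ioc 0 D, |Sd d| ≤ C * x / Real.log x ^ (2:ℝ) := by
      intro d hd
      rw [Finset.mem_Ioc] at hd
      exact key_bound C hC d hd.1 x hx2
    -- bound |Sd d| trivially
    have htriv : ∀ d : ℕ, 0 < d → |Sd d| ≤ ((N:ℝ) + 3) / d := by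
      intro d hd
      have hd' : (0:ℝ) < d := by exact_mod_cast hd
      calc |Sd d| ≤ ∑ n ∈ (Finset.Icc 1 N).filter (fun n => d ∣ n + 3),
            |((moebius (n + 2) : ℤ) : ℝ) * ((moebius (n + 1) : ℤ) : ℝ)| :=
          Finset.abs_sum_le_sum_abs _ _
        _ ≤ ∑ n ∈ (Finset.Icc 1 N).filter (fun n => d ∣ n + 3), 1 := by
          refine Finset.sum_le_sum fun n _ => ?_
          rw [abs_mul]
          have h1 : |((moebius (n + 2) : ℤ) : ℝ)| ≤ 1 := by
            exact_mod_cast (abs_moebius_le_one (n := n + 2))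
          have h2 : |((moebius (n + 1) : ℤ) : ℝ)| ≤ 1 := by
            exact_mod_cast (abs_moebius_le_one (n := n + 1))
          calc |((moebius (n + 2) : ℤ) : ℝ)| * |((moebius (n + 1) : ℤ) : ℝ)|
              ≤ 1 * 1 := mul_le_mul h1 h2 (abs_nonneg _) zero_le_one
            _ = 1 := by norm_num
        _ = (((Finset.Icc 1 N).filter (fun n => d ∣ n + 3)).card : ℝ) := by
          rw [Finset.sum_const, nsmul_eq_mul, mul_one]
        _ ≤ (((N + 3) / d : ℕ) : ℝ) := by exact_mod_cast count_le d N hd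
        _ ≤ ((N:ℝ) + 3) / d := by
          calc (((N + 3) / d : ℕ) : ℝ) ≤ ((N + 3 : ℕ) : ℝ) / (d:ℝ) := Nat.cast_div_le
            _ = ((N:ℝ) + 3) / d := by push_cast; ring
    -- main estimate
    have hmain : |∑ d ∈ Finset.Icc 1 (N + 3), (((moebius d : ℤ) : ℝ) / d) * Sd d|
        ≤ (D:ℝ) * (C * x / Real.log x ^ (2:ℝ)) + ((N:ℝ) + 3) * (1 / D) := by
      have habs0 : ∀ d : ℕ, 0 < d → |(((moebius d : ℤ) : ℝ) / d) * Sd d| ≤ (1 / d) * |Sd d| := by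
        intro d hd
        have hd' : (0:ℝ) < d := by exact_mod_cast hd
        rw [abs_mul, abs_div, Nat.abs_cast]
        have : |((moebius d : ℤ) : ℝ)| ≤ 1 := by exact_mod_cast (abs_moebius_le_one (n := d))
        gcongr
      calc |∑ d ∈ Finset.Icc 1 (N + 3), (((moebius d : ℤ) : ℝ) / d) * Sd d|
          ≤ ∑ d ∈ Finset.Icc 1 (N + 3), |(((moebius d : ℤ) : ℝ) / d) * Sd d| :=
            Finset.abs_sum_le_sum_abs _ _
        _ = ∑ d ∈ Finset.Ioc 0 (N + 3), |(((moebius d : ℤ) : ℝ) / d) * Sd d| := by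
            rw [← Finset.Icc_add_one_left_eq_Ioc, zero_add]
        _ = (∑ d ∈ Finset.Ioc 0 D, |(((moebius d : ℤ) : ℝ) / d) * Sd d|)
            + ∑ d ∈ Finset.Ioc D (N + 3), |(((moebius d : ℤ) : ℝ) / d) * Sd d| := by
            rw [← Finset.sum_Ioc_consecutive _ (Nat.zero_le D) hDN]
        _ ≤ (D:ℝ) * (C * x / Real.log x ^ (2:ℝ)) + ((N:ℝ) + 3) * (1 / D) := by
            gcongr ?_ + ?_
            · calc ∑ d ∈ Finset.Ioc 0 D, |(((moebius d : ℤ) : ℝ) / d) * Sd d|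
                  ≤ ∑ d ∈ Finset.Ioc 0 D, C * x / Real.log x ^ (2:ℝ) := by
                    refine Finset.sum_le_sum fun d hd => ?_
                    have hd0 : 0 < d := (Finset.mem_Ioc.mp hd).1
                    have hd' : (1:ℝ) ≤ d := by exact_mod_cast hd0
                    calc |(((moebius d : ℤ) : ℝ) / d) * Sd d| ≤ (1 / d) * |Sd d| := habs0 d hd0
                      _ ≤ 1 * (C * x / Real.log x ^ (2:ℝ)) := by
                        apply mul_le_mul _ (hsmall d hd) (abs_nonneg _) zero_le_one
                        rw [div_le_one (by linarith)]; linarith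
                      _ = C * x / Real.log x ^ (2:ℝ) := one_mul _
                _ = (D:ℝ) * (C * x / Real.log x ^ (2:ℝ)) := by
                    rw [Finset.sum_const, Nat.card_Ioc, nsmul_eq_mul]
                    norm_num
            · calc ∑ d ∈ Finset.Ioc D (N + 3), |(((moebius d : ℤ) : ℝ) / d) * Sd d|
                  ≤ ∑ d ∈ Finset.Ioc D (N + 3), ((N:ℝ) + 3) * (1 / (d:ℝ) ^ 2) := by
                    refine Finset.sum_le_sum fun d hd => ?_
                    have hd0 : 0 < d := lt_of_le_of_lt (Nat.zero_le D) (Finset.mem_Ioc.mp hd).1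
                    have hd' : (0:ℝ) < d := by exact_mod_cast hd0
                    calc |(((moebius d : ℤ) : ℝ) / d) * Sd d| ≤ (1 / d) * |Sd d| := habs0 d hd0
                      _ ≤ (1 / d) * (((N:ℝ) + 3) / d) := by
                        apply mul_le_mul_of_nonneg_left (htriv d hd0) (by positivity)
                      _ = ((N:ℝ) + 3) * (1 / (d:ℝ) ^ 2) := by
                        rw [div_mul_div_comm, one_mul, mul_one_div, sq]
                _ = ((N:ℝ) + 3) * ∑ d ∈ Finset.Ioc D (N + 3), (1 / (d:ℝ) ^ 2) := by
                    rw [Finset.mul_sum]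
                _ ≤ ((N:ℝ) + 3) * (1 / D) := by
                    apply mul_le_mul_of_nonneg_left (tele D hD1 (N + 3)) (by positivity)
    -- convert to the dominating function
    have hrpow : Real.log x ^ (2:ℝ) = Real.log x ^ 2 := by
      rw [show (2:ℝ) = ((2:ℕ):ℝ) by norm_num, Real.rpow_natCast]
    rw [Real.norm_eq_abs, abs_mul, hStot, abs_of_pos (by positivity : (0:ℝ) < 1 / x)]
    calc (1 / x) * |∑ d ∈ Finset.Icc 1 (N + 3), (((moebius d : ℤ) : ℝ) / d) * Sd d|
        ≤ (1 / x) * ((D:ℝ) * (C * x / Real.log x ^ (2:ℝ)) + ((N:ℝ) + 3) * (1 / D)) := by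
          apply mul_le_mul_of_nonneg_left hmain (by positivity)
      _ ≤ h x := by
          rw [hhdef, hrpow]
          have hterm1 : (1 / x) * ((D:ℝ) * (C * x / Real.log x ^ 2))
              ≤ C * (Real.log x + 1) / Real.log x ^ 2 := by
            have : (1 / x) * ((D:ℝ) * (C * x / Real.log x ^ 2))
                = C * (D:ℝ) / Real.log x ^ 2 := by
              field_simp
            rw [this]
            gcongr
          have hterm2 : (1 / x) * (((N:ℝ) + 3) * (1 / D))
              ≤ (x + 3) / (x * Real.log x) := by
            have hD0 : (0:ℝ) < D := by exact_mod_cast hD1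
            have : (1 / x) * (((N:ℝ) + 3) * (1 / D)) = ((N:ℝ) + 3) / (x * (D:ℝ)) := by
              field_simp
            rw [this]
            exact div_le_div₀ (by linarith) (by linarith) (mul_pos hx0 hlog0)
              (mul_le_mul_of_nonneg_left hDlog hx0.le)
          calc (1 / x) * ((D:ℝ) * (C * x / Real.log x ^ 2) + ((N:ℝ) + 3) * (1 / D))
              = (1 / x) * ((D:ℝ) * (C * x / Real.log x ^ 2))
                + (1 / x) * (((N:ℝ) + 3) * (1 / D)) := by ring
            _ ≤ _ := add_le_add hterm1 hterm2
  · -- the dominating function tends to zero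
    have h1 : Tendsto (fun x : ℝ => C * (Real.log x + 1) / Real.log x ^ 2) atTop (nhds 0) := by
      have base : Tendsto (fun y : ℝ => C / y + C / y ^ 2) atTop (nhds 0) := by
        have t1 : Tendsto (fun y : ℝ => C / y) atTop (nhds 0) :=
          tendsto_const_nhds.div_atTop tendsto_id
        have t2 : Tendsto (fun y : ℝ => C / y ^ 2) atTop (nhds 0) :=
          tendsto_const_nhds.div_atTop (tendsto_pow_atTop (by norm_num))
        simpa using t1.add t2
      have heq : (fun y : ℝ => C / y + C / y ^ 2) =ᶠ[atTop]
          (fun y : ℝ => C * (y + 1) / y ^ 2) := by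
        filter_upwards [eventually_gt_atTop (0:ℝ)] with y hy
        field_simp
      exact (base.congr' heq).comp Real.tendsto_log_atTop
    have h2 : Tendsto (fun x : ℝ => (x + 3) / (x * Real.log x)) atTop (nhds 0) := by
      have hnum : Tendsto (fun x : ℝ => (x + 3) / x) atTop (nhds 1) := by
        have : Tendsto (fun x : ℝ => 1 + 3 / x) atTop (nhds (1 + 0)) :=
          tendsto_const_nhds.add (tendsto_const_nhds.div_atTop tendsto_id)
        rw [add_zero] at this
        refine this.congr' ?_
        filter_upwards [eventually_gt_atTop (0:ℝ)] with x hx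
        field_simp
      have := hnum.div_atTop Real.tendsto_log_atTop
      refine this.congr' ?_
      filter_upwards [eventually_gt_atTop (0:ℝ)] with x hx
      rw [div_div]
    simpa [hhdef] using h1.add h2
end
end

section
/- Assume the 2-point Chowla-type conjecture: for every A > 0 there is a constant C_A such that |Σ_{n ≤ x} μ(n+2) μ(n+1) exp(2πinα)| ≤ C_A x/(log x)^A holds for all x ≥ 2 uniformly in all real α. Then for every a > 0, (1/x) Σ_{n ≤ x} (σ_a(n+3)/(n+3)^a) μ(n+2) μ(n+1) → 0 as x → ∞. -/
open Filter

noncomputable section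

/-- `σ_a(n) = ∑_{d ∣ n} d^a` for real `a`. -/
def sigmaR (a : ℝ) (n : ℕ) : ℝ :=
  ∑ d ∈ n.divisors, (d : ℝ) ^ a

namespace Stmt14Aux

open Finset

/-- `e(t) = exp(2πit)`. -/
def er (t : ℝ) : ℂ := Complex.exp ((2 * Real.pi * t : ℝ) * Complex.I)

lemma er_abs (t : ℝ) : ‖er t‖ = 1 := Complex.norm_exp_ofReal_mul_I _

lemma er_add (s t : ℝ) : er (s + t) = er s * er t := by
  rw [er, er, er, ← Complex.exp_add]
  congr 1
  push_cast
  ring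

lemma er_nat_mul (j : ℕ) (t : ℝ) : er (j * t) = er t ^ j := by
  rw [er, er, ← Complex.exp_nat_mul]
  congr 1
  push_cast
  ring

lemma er_nat (m : ℕ) : er m = 1 := by
  rw [er]
  have : ((2 * Real.pi * (m:ℝ) : ℝ) : ℂ) * Complex.I = (m : ℤ) * (2 * Real.pi * Complex.I) := by
    push_cast; ring
  rw [this, Complex.exp_int_mul_two_pi_mul_I]

lemma er_eq_one_iff (m d : ℕ) (hd : 0 < d) : er ((m : ℝ) / d) = 1 ↔ d ∣ m := by
  constructor
  · intro h
    rw [er, Complex.exp_eq_one_iff] at h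
    obtain ⟨n, hn⟩ := h
    have hπI : (2 * (Real.pi:ℂ) * Complex.I) ≠ 0 := by
      simp [Real.pi_ne_zero, Complex.I_ne_zero]
    have h2 : (((m:ℝ) / d : ℝ) : ℂ) * (2 * (Real.pi:ℂ) * Complex.I)
        = (n:ℂ) * (2 * (Real.pi:ℂ) * Complex.I) := by
      rw [← hn]; push_cast; ring
    have h3 : (((m:ℝ) / d : ℝ) : ℂ) = (n:ℂ) := mul_right_cancel₀ hπI h2
    have h4 : (m:ℝ) / d = (n:ℝ) := by exact_mod_cast h3
    have h5 : (m:ℝ) = (n:ℝ) * d := by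
      field_simp at h4
      linarith [h4]
    have h6 : (m:ℤ) = n * d := by exact_mod_cast h5
    have : (d:ℤ) ∣ (m:ℤ) := ⟨n, by linarith [h6]⟩
    exact_mod_cast this
  · intro ⟨k, hk⟩
    subst hk
    have : ((d * k : ℕ) : ℝ) / d = (k : ℕ) := by
      field_simp
      push_cast
      ring
    rw [this, er_nat]

lemma orth (d m : ℕ) (hd : 0 < d) :
    ∑ j ∈ range d, er ((m : ℝ) * j / d) = if d ∣ m then (d : ℂ) else 0 := by
  have hterm : ∀ j : ℕ, er ((m : ℝ) * j / d) = er ((m : ℝ) / d) ^ j := by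
    intro j
    rw [← er_nat_mul]
    congr 1
    ring
  simp only [hterm]
  by_cases h : d ∣ m
  · simp only [if_pos h]
    rw [(er_eq_one_iff m d hd).2 h]
    simp
  · simp only [if_neg h]
    have hz : er ((m:ℝ)/d) ≠ 1 := fun hc => h ((er_eq_one_iff m d hd).1 hc)
    rw [geom_sum_eq hz]
    have : er ((m:ℝ)/d) ^ d = 1 := by
      rw [← er_nat_mul]
      have : (d:ℝ) * ((m:ℝ)/d) = (m:ℝ) := by field_simp
      rw [this, er_nat]
    rw [this]
    simp

def muC (n : ℕ) : ℂ :=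
  ((ArithmeticFunction.moebius (n + 2) : ℤ) : ℂ) * ((ArithmeticFunction.moebius (n + 1) : ℤ) : ℂ)

def muR (n : ℕ) : ℝ :=
  ((ArithmeticFunction.moebius (n + 2) : ℤ) : ℝ) * ((ArithmeticFunction.moebius (n + 1) : ℤ) : ℝ)

lemma Td_bound (N d : ℕ) (hd : 0 < d) (B : ℝ)
    (hB : ∀ α : ℝ, ‖(∑ n ∈ Icc 1 N,
      ((ArithmeticFunction.moebius (n + 2) : ℤ) : ℂ) *
        ((ArithmeticFunction.moebius (n + 1) : ℤ) : ℂ) *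
        Complex.exp (2 * (Real.pi : ℂ) * Complex.I * (n : ℂ) * (α : ℂ)))‖ ≤ B) :
    |∑ n ∈ Icc 1 N, (if d ∣ n + 3 then muR n else 0)| ≤ B := by
  have hdR : (d : ℝ) ≠ 0 := Nat.cast_ne_zero.2 hd.ne'
  have hdC : (d : ℂ) ≠ 0 := Nat.cast_ne_zero.2 hd.ne'
  have exp_eq : ∀ (n j : ℕ),
      Complex.exp (2 * (Real.pi : ℂ) * Complex.I * (n : ℂ) * (((j : ℝ) / d : ℝ) : ℂ))
        = er ((n : ℝ) * ((j : ℝ) / d)) := by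
    intro n j
    rw [er]
    congr 1
    push_cast
    ring
  have comb : ∀ n j : ℕ, er (3 * (j : ℝ) / d) * er ((n : ℝ) * ((j : ℝ) / d))
      = er (((n + 3 : ℕ) : ℝ) * j / d) := by
    intro n j
    rw [← er_add]
    congr 1
    push_cast
    ring
  have h1 : (d : ℂ)⁻¹ * ∑ j ∈ range d, er (3 * (j : ℝ) / d) *
        (∑ n ∈ Icc 1 N, muC n * er ((n : ℝ) * ((j : ℝ) / d)))
      = ∑ n ∈ Icc 1 N, (if d ∣ n + 3 then muC n else 0) := by
    calc (d : ℂ)⁻¹ * ∑ j ∈ range d, er (3 * (j : ℝ) / d) *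
          (∑ n ∈ Icc 1 N, muC n * er ((n : ℝ) * ((j : ℝ) / d)))
        = (d : ℂ)⁻¹ * ∑ j ∈ range d, ∑ n ∈ Icc 1 N,
            muC n * er (((n + 3 : ℕ) : ℝ) * j / d) := by
          congr 1
          refine sum_congr rfl fun j _ => ?_
          rw [Finset.mul_sum]
          refine sum_congr rfl fun n _ => ?_
          rw [← comb n j]
          ring
      _ = (d : ℂ)⁻¹ * ∑ n ∈ Icc 1 N, ∑ j ∈ range d,
            muC n * er (((n + 3 : ℕ) : ℝ) * j / d) := by rw [Finset.sum_comm]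
      _ = (d : ℂ)⁻¹ * ∑ n ∈ Icc 1 N, muC n * (if d ∣ n + 3 then (d : ℂ) else 0) := by
          congr 1
          refine sum_congr rfl fun n _ => ?_
          rw [← Finset.mul_sum, orth d (n + 3) hd]
      _ = ∑ n ∈ Icc 1 N, (if d ∣ n + 3 then muC n else 0) := by
          rw [Finset.mul_sum]
          refine sum_congr rfl fun n _ => ?_
          by_cases h : d ∣ n + 3 <;> simp [h]
          field_simp
  have h2 : ((∑ n ∈ Icc 1 N, (if d ∣ n + 3 then muR n else 0) : ℝ) : ℂ)
      = ∑ n ∈ Icc 1 N, (if d ∣ n + 3 then muC n else 0) := by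
    push_cast [apply_ite (fun r : ℝ => (r : ℂ))]
    refine sum_congr rfl fun n _ => ?_
    by_cases h : d ∣ n + 3 <;> simp [h, muR, muC]
  have hEj : ∀ j : ℕ, ‖(∑ n ∈ Icc 1 N, muC n * er ((n : ℝ) * ((j : ℝ) / d)))‖ ≤ B := by
    intro j
    have h := hB ((j : ℝ) / d)
    have heq : (∑ n ∈ Icc 1 N, muC n * er ((n : ℝ) * ((j : ℝ) / d)))
        = ∑ n ∈ Icc 1 N,
          ((ArithmeticFunction.moebius (n + 2) : ℤ) : ℂ) *
            ((ArithmeticFunction.moebius (n + 1) : ℤ) : ℂ) *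
            Complex.exp (2 * (Real.pi : ℂ) * Complex.I * (n : ℂ) * (((j : ℝ) / d : ℝ) : ℂ)) := by
      refine sum_congr rfl fun n _ => ?_
      rw [exp_eq, muC]
    rw [heq]
    exact h
  calc |∑ n ∈ Icc 1 N, (if d ∣ n + 3 then muR n else 0)|
      = ‖(((∑ n ∈ Icc 1 N, (if d ∣ n + 3 then muR n else 0) : ℝ) : ℂ))‖ := by
        rw [Complex.norm_real, Real.norm_eq_abs]
    _ = ‖((d : ℂ)⁻¹ * ∑ j ∈ range d, er (3 * (j : ℝ) / d) *
          (∑ n ∈ Icc 1 N, muC n * er ((n : ℝ) * ((j : ℝ) / d))))‖ := by rw [h2, h1]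
    _ ≤ (d : ℝ)⁻¹ * ∑ j ∈ range d, B := by
        rw [norm_mul]
        gcongr ?_ * ?_
        · rw [norm_inv, Complex.norm_natCast]
        · refine (norm_sum_le _ _).trans ?_
          refine Finset.sum_le_sum fun j _ => ?_
          rw [norm_mul, er_abs, one_mul]
          exact hEj j
    _ = B := by
        rw [Finset.sum_const, card_range, nsmul_eq_mul]
        field_simp

lemma sigmaR_div (a : ℝ) (m : ℕ) (hm : 0 < m) :
    (∑ d ∈ m.divisors, (d : ℝ) ^ a) / (m : ℝ) ^ a = ∑ d ∈ m.divisors, (d : ℝ) ^ (-a) := by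
  have h1 : (∑ d ∈ m.divisors, (d : ℝ) ^ a) = ∑ d ∈ m.divisors, ((m / d : ℕ) : ℝ) ^ a :=
    (Nat.sum_div_divisors m (fun d => (d : ℝ) ^ a)).symm
  rw [h1, Finset.sum_div]
  refine sum_congr rfl fun d hd => ?_
  obtain ⟨hdvd, -⟩ := Nat.mem_divisors.1 hd
  have hd0 : 0 < d := Nat.pos_of_dvd_of_pos hdvd hm
  have hdR : (0:ℝ) < d := Nat.cast_pos.2 hd0
  have hmR : (0:ℝ) < m := Nat.cast_pos.2 hm
  rw [Nat.cast_div hdvd (Nat.cast_ne_zero.2 hd0.ne' : (d:ℝ) ≠ 0),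
    Real.div_rpow hmR.le hdR.le, Real.rpow_neg hdR.le]
  rw [div_right_comm, div_self (Real.rpow_pos_of_pos hmR a).ne', one_div]

lemma count_bound (N d : ℕ) (hd : 0 < d) :
    (Finset.filter (fun n => d ∣ n + 3) (Finset.Icc 1 N)).card ≤ (N + 3) / d := by
  have h := Finset.card_le_card_of_injOn (fun n => (n + 3) / d)
    (s := Finset.filter (fun n => d ∣ n + 3) (Finset.Icc 1 N))
    (t := Finset.Icc 1 ((N + 3) / d)) ?_ ?_
  · simpa [Nat.card_Icc] using h
  · intro n hn
    rw [mem_coe, mem_filter, mem_Icc] at hn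
    obtain ⟨⟨h1, h2⟩, hdvd⟩ := hn
    rw [mem_coe, mem_Icc]
    constructor
    · exact (Nat.one_le_div_iff hd).2 (Nat.le_of_dvd (by omega) hdvd)
    · exact Nat.div_le_div_right (by omega)
  · intro n hn m hm hnm
    simp only [coe_filter, Set.mem_setOf_eq] at hn hm
    have h1 : n + 3 = (n + 3) / d * d := (Nat.div_mul_cancel hn.2).symm
    have h2 : m + 3 = (m + 3) / d * d := (Nat.div_mul_cancel hm.2).symm
    have heq : (n + 3) / d = (m + 3) / d := hnm
    rw [heq] at h1
    have := h1.trans h2.symm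
    omega

lemma abs_moebius_le (m : ℕ) : |((ArithmeticFunction.moebius m : ℤ) : ℝ)| ≤ 1 := by
  by_cases h : Squarefree m
  · rw [ArithmeticFunction.moebius_apply_of_squarefree h]
    push_cast
    rw [abs_pow, abs_neg, abs_one, one_pow]
  · rw [ArithmeticFunction.moebius_eq_zero_of_not_squarefree h]
    norm_num

lemma abs_muR_le (n : ℕ) : |muR n| ≤ 1 := by
  rw [muR, abs_mul]
  exact mul_le_one₀ (abs_moebius_le _) (abs_nonneg _) (abs_moebius_le _)

end Stmt14Aux

open Stmt14Aux Finset

set_option maxHeartbeats 1000000 in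
theorem stmt_14 (hChowla : TwoPointChowla) (a : ℝ) (ha : 0 < a) :
    Tendsto (fun x : ℝ => (1 / x) *
        ∑ n ∈ Finset.Icc 1 ⌊x⌋₊,
          (sigmaR a (n + 3) / ((n : ℝ) + 3) ^ a) *
            ((ArithmeticFunction.moebius (n + 2) : ℤ) : ℝ) *
            ((ArithmeticFunction.moebius (n + 1) : ℤ) : ℝ))
      atTop (nhds 0) := by
  rw [NormedAddCommGroup.tendsto_nhds_zero]
  intro ε hε
  set ε' : ℝ := ε / 2 with hε'def
  have hε'0 : 0 < ε' := by positivity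
  obtain ⟨C₀, hC₀⟩ := hChowla 1 one_pos
  set C : ℝ := max C₀ 1 with hCdef
  have hC1 : (1:ℝ) ≤ C := le_max_right _ _
  have hC0 : (0:ℝ) < C := lt_of_lt_of_le one_pos hC1
  have hCbound : ∀ x : ℝ, 3 ≤ x → ∀ α : ℝ,
      ‖(∑ n ∈ Finset.Icc 1 ⌊x⌋₊,
        ((ArithmeticFunction.moebius (n + 2) : ℤ) : ℂ) *
          ((ArithmeticFunction.moebius (n + 1) : ℤ) : ℂ) *
          Complex.exp (2 * (Real.pi : ℂ) * Complex.I * (n : ℂ) * (α : ℂ)))‖ ≤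
      C * x / Real.log x := by
    intro x hx α
    have h := hC₀ x (by linarith) α
    rw [Real.rpow_one] at h
    refine h.trans ?_
    have hlog : 0 < Real.log x := Real.log_pos (by linarith)
    have hx0 : (0:ℝ) < x := by linarith
    gcongr
    exact le_max_left _ _
  -- summability
  have hsum : Summable (fun d : ℕ => (d:ℝ) ^ (-(1+a))) :=
    Real.summable_nat_rpow.2 (by linarith)
  have hnn : ∀ d : ℕ, 0 ≤ (d:ℝ) ^ (-(1+a)) := fun d => Real.rpow_nonneg (Nat.cast_nonneg d) _
  set K : ℝ := ∑' d : ℕ, (d:ℝ) ^ (-(1+a)) with hKdef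
  -- choose D
  have hptl : ∀ᶠ D : ℕ in atTop, K - ∑ i ∈ range D, (i:ℝ) ^ (-(1+a)) ≤ ε'/6 := by
    have h := hsum.hasSum.tendsto_sum_nat
    have h2 := h.eventually (eventually_ge_nhds (show K - ε'/6 < K by linarith))
    filter_upwards [h2] with D hD
    linarith
  have hDa : ∀ᶠ D : ℕ in atTop, (D:ℝ) ^ (-a) ≤ ε'/18 := by
    have h := (tendsto_rpow_neg_atTop ha).comp (tendsto_natCast_atTop_atTop (R := ℝ))
    exact h.eventually (eventually_le_nhds (by linarith : (0:ℝ) < ε'/18))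
  obtain ⟨D, hD1, htail0, hDa'⟩ : ∃ D : ℕ, 1 ≤ D ∧
      (K - ∑ i ∈ range (D+1), (i:ℝ) ^ (-(1+a)) ≤ ε'/6) ∧ (D:ℝ) ^ (-a) ≤ ε'/18 := by
    rw [eventually_atTop] at hptl hDa
    obtain ⟨D₁, h₁⟩ := hptl
    obtain ⟨D₂, h₂⟩ := hDa
    exact ⟨max 1 (max D₁ D₂), le_max_left _ _,
      h₁ _ (by omega : D₁ ≤ max 1 (max D₁ D₂) + 1),
      h₂ _ (by omega : D₂ ≤ max 1 (max D₁ D₂))⟩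
  have hD0R : (0:ℝ) < D := by exact_mod_cast hD1
  -- tail bound
  have htail : ∀ M : ℕ, ∑ dd ∈ Ioc D M, (dd:ℝ) ^ (-(1+a)) ≤ ε'/6 := by
    intro M
    have hs2 : Summable (fun i : ℕ => ((i + (D+1) : ℕ) : ℝ) ^ (-(1+a))) :=
      (summable_nat_add_iff (D+1)).2 hsum
    have hIoc : Ioc D M = Ico (D+1) (M+1) := by
      ext dd; simp only [mem_Ioc, mem_Ico]; omega
    rw [hIoc, sum_Ico_eq_sum_range]
    have e2 : ∀ i : ℕ, (((D+1) + i : ℕ) : ℝ) ^ (-(1+a)) = ((i + (D+1) : ℕ) : ℝ) ^ (-(1+a)) := by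
      intro i; rw [Nat.add_comm]
    calc ∑ i ∈ range (M + 1 - (D+1)), ((D+1+i : ℕ) : ℝ) ^ (-(1+a))
        = ∑ i ∈ range (M + 1 - (D+1)), ((i + (D+1) : ℕ) : ℝ) ^ (-(1+a)) :=
          sum_congr rfl fun i _ => e2 i
      _ ≤ ∑' i : ℕ, ((i + (D+1) : ℕ) : ℝ) ^ (-(1+a)) :=
          Summable.sum_le_tsum _ (fun i _ => hnn _) hs2
      _ = K - ∑ i ∈ range (D+1), (i:ℝ) ^ (-(1+a)) := by
          have := Summable.sum_add_tsum_nat_add (f := fun d : ℕ => (d:ℝ) ^ (-(1+a))) (D+1) hsum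
          push_cast at this ⊢
          linarith
      _ ≤ ε'/6 := htail0
  -- eventualities in x
  have hlogev : ∀ᶠ x : ℝ in atTop, max 1 (3 * D * C / ε') ≤ Real.log x :=
    Real.tendsto_log_atTop.eventually_ge_atTop _
  filter_upwards [eventually_ge_atTop (3:ℝ), hlogev] with x hx3 hlogx
  have hx0 : (0:ℝ) < x := by linarith
  have hlog1 : (1:ℝ) ≤ Real.log x := le_trans (le_max_left _ _) hlogx
  have hlogpos : (0:ℝ) < Real.log x := by linarith
  have hlog2 : 3 * D * C / ε' ≤ Real.log x := le_trans (le_max_right _ _) hlogx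
  set N : ℕ := ⌊x⌋₊ with hNdef
  have hNx : (N:ℝ) ≤ x := Nat.floor_le hx0.le
  have hN3 : 3 ≤ N := Nat.le_floor (by exact_mod_cast hx3)
  have hN3R : (N:ℝ) + 3 ≤ 2 * x := by linarith
  -- the weighted partial sums
  set T : ℕ → ℝ := fun dd => ∑ n ∈ Icc 1 N, (if dd ∣ n + 3 then muR n else 0) with hTdef
  -- rewrite the sum
  have hrw : (∑ n ∈ Finset.Icc 1 N,
        (sigmaR a (n + 3) / ((n : ℝ) + 3) ^ a) *
          ((ArithmeticFunction.moebius (n + 2) : ℤ) : ℝ) *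
          ((ArithmeticFunction.moebius (n + 1) : ℤ) : ℝ))
      = ∑ dd ∈ Icc 1 (N+3), (dd:ℝ) ^ (-a) * T dd := by
    have step1 : ∀ n ∈ Icc 1 N,
        (sigmaR a (n + 3) / ((n : ℝ) + 3) ^ a) *
          ((ArithmeticFunction.moebius (n + 2) : ℤ) : ℝ) *
          ((ArithmeticFunction.moebius (n + 1) : ℤ) : ℝ)
        = ∑ dd ∈ Icc 1 (N+3), (if dd ∣ n + 3 then (dd:ℝ) ^ (-a) * muR n else 0) := by
      intro n hn
      have hmem := mem_Icc.1 hn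
      have hcast : ((n : ℝ) + 3) = ((n + 3 : ℕ) : ℝ) := by push_cast; ring
      have hdivsum : sigmaR a (n + 3) / ((n : ℝ) + 3) ^ a
          = ∑ dd ∈ (n+3).divisors, (dd:ℝ) ^ (-a) := by
        rw [hcast, sigmaR]
        exact sigmaR_div a (n+3) (by omega)
      have hfil : Finset.filter (fun dd => dd ∣ n + 3) (Icc 1 (N+3)) = (n+3).divisors := by
        ext dd
        simp only [mem_filter, mem_Icc, Nat.mem_divisors]
        constructor
        · rintro ⟨⟨h1, h2⟩, h3⟩
          exact ⟨h3, by omega⟩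
        · rintro ⟨h1, -⟩
          refine ⟨⟨Nat.pos_of_dvd_of_pos h1 (by omega), ?_⟩, h1⟩
          have := Nat.le_of_dvd (by omega) h1
          omega
      rw [mul_assoc, hdivsum, ← hfil, ← sum_filter, ← sum_mul]
      rfl
    rw [sum_congr rfl step1, Finset.sum_comm]
    refine sum_congr rfl fun dd _ => ?_
    rw [hTdef, Finset.mul_sum]
    refine sum_congr rfl fun n _ => ?_
    by_cases h : dd ∣ n + 3 <;> simp [h]
  -- trivial bound
  have hTtriv : ∀ dd : ℕ, 0 < dd → |T dd| ≤ (N:ℝ)/dd + 3 := by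
    intro dd hdd
    have hddR : (1:ℝ) ≤ dd := by exact_mod_cast hdd
    have h1 : |T dd| ≤ ∑ n ∈ Icc 1 N, (if dd ∣ n + 3 then (1:ℝ) else 0) := by
      refine (Finset.abs_sum_le_sum_abs _ _).trans (sum_le_sum fun n _ => ?_)
      by_cases h : dd ∣ n + 3
      · simpa [h] using abs_muR_le n
      · simp [h]
    calc |T dd| ≤ ∑ n ∈ Icc 1 N, (if dd ∣ n + 3 then (1:ℝ) else 0) := h1
      _ = ((Finset.filter (fun n => dd ∣ n + 3) (Icc 1 N)).card : ℝ) := by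
          rw [Finset.sum_boole]
      _ ≤ (((N+3)/dd : ℕ) : ℝ) := by exact_mod_cast count_bound N dd hdd
      _ ≤ ((N+3 : ℕ) : ℝ) / dd := Nat.cast_div_le
      _ ≤ (N:ℝ)/dd + 3 := by
          push_cast
          rw [add_div]
          have h3 : (3:ℝ)/dd ≤ 3 := div_le_self (by norm_num) hddR
          linarith
  -- Chowla bound
  have hTchow : ∀ dd : ℕ, 0 < dd → |T dd| ≤ C * x / Real.log x := by
    intro dd hdd
    exact Td_bound N dd hdd _ (hCbound x hx3)
  -- main bound
  have habs : |∑ dd ∈ Icc 1 (N+3), (dd:ℝ) ^ (-a) * T dd|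
      ≤ ∑ dd ∈ Icc 1 (N+3), (dd:ℝ) ^ (-a) * |T dd| := by
    refine (Finset.abs_sum_le_sum_abs _ _).trans (le_of_eq (sum_congr rfl fun dd _ => ?_))
    rw [abs_mul, abs_of_nonneg (Real.rpow_nonneg (Nat.cast_nonneg dd) _)]
  have hsplit := sum_filter_add_sum_filter_not (Icc 1 (N+3)) (fun dd => dd ≤ D)
    (fun dd => (dd:ℝ) ^ (-a) * |T dd|)
  -- part 1 : small divisors
  have hp1 : ∑ dd ∈ Finset.filter (fun dd => dd ≤ D) (Icc 1 (N+3)), (dd:ℝ) ^ (-a) * |T dd|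
      ≤ (ε'/3) * x := by
    have hB0 : (0:ℝ) ≤ C * x / Real.log x := by positivity
    have hM : ∀ dd ∈ Finset.filter (fun dd => dd ≤ D) (Icc 1 (N+3)),
        (dd:ℝ) ^ (-a) * |T dd| ≤ C * x / Real.log x := by
      intro dd hdd
      rw [mem_filter, mem_Icc] at hdd
      have hdd0 : 0 < dd := hdd.1.1
      have h1 : (dd:ℝ) ^ (-a) ≤ 1 :=
        Real.rpow_le_one_of_one_le_of_nonpos (by exact_mod_cast hdd0) (by linarith)
      calc (dd:ℝ) ^ (-a) * |T dd| ≤ 1 * (C * x / Real.log x) :=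
            mul_le_mul h1 (hTchow dd hdd0) (abs_nonneg _) zero_le_one
        _ = C * x / Real.log x := one_mul _
    refine (Finset.sum_le_card_nsmul _ _ _ hM).trans ?_
    rw [nsmul_eq_mul]
    have hcard : (((Finset.filter (fun dd => dd ≤ D) (Icc 1 (N+3))).card) : ℝ) ≤ (D:ℝ) := by
      have hss : Finset.filter (fun dd => dd ≤ D) (Icc 1 (N+3)) ⊆ Icc 1 D := by
        intro dd h
        rw [mem_filter, mem_Icc] at h
        rw [mem_Icc]
        exact ⟨h.1.1, h.2⟩
      have h2 : (Finset.filter (fun dd => dd ≤ D) (Icc 1 (N+3))).card ≤ D := by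
        simpa [Nat.card_Icc] using Finset.card_le_card hss
      exact_mod_cast h2
    calc (((Finset.filter (fun dd => dd ≤ D) (Icc 1 (N+3))).card) : ℝ) * (C * x / Real.log x)
        ≤ (D:ℝ) * (C * x / Real.log x) := mul_le_mul_of_nonneg_right hcard hB0
      _ = ((D:ℝ) * C / Real.log x) * x := by ring
      _ ≤ (ε'/3) * x := by
          have hgoal : (D:ℝ) * C / Real.log x ≤ ε'/3 := by
            rw [div_le_iff₀ hε'0] at hlog2
            rw [div_le_iff₀ hlogpos]
            nlinarith
          exact mul_le_mul_of_nonneg_right hgoal hx0.le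
  -- part 2 : large divisors
  have hp2 : ∑ dd ∈ Finset.filter (fun dd => ¬ dd ≤ D) (Icc 1 (N+3)), (dd:ℝ) ^ (-a) * |T dd|
      ≤ (ε'/6) * x + (ε'/3) * x := by
    have hsub : Finset.filter (fun dd => ¬ dd ≤ D) (Icc 1 (N+3)) ⊆ Ioc D (N+3) := by
      intro dd h
      rw [mem_filter, mem_Icc] at h
      rw [mem_Ioc]
      omega
    have hmono : ∑ dd ∈ Finset.filter (fun dd => ¬ dd ≤ D) (Icc 1 (N+3)),
          (dd:ℝ) ^ (-a) * |T dd|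
        ≤ ∑ dd ∈ Ioc D (N+3), (dd:ℝ) ^ (-a) * |T dd| :=
      sum_le_sum_of_subset_of_nonneg hsub (fun dd _ _ =>
        mul_nonneg (Real.rpow_nonneg (Nat.cast_nonneg dd) _) (abs_nonneg _))
    refine hmono.trans ?_
    have hterm : ∀ dd ∈ Ioc D (N+3),
        (dd:ℝ) ^ (-a) * |T dd| ≤ (N:ℝ) * (dd:ℝ) ^ (-(1+a)) + 3 * (D:ℝ) ^ (-a) := by
      intro dd hdd
      rw [mem_Ioc] at hdd
      have hdd0 : 0 < dd := by omega
      have hddR : (0:ℝ) < dd := by exact_mod_cast hdd0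
      have h2 : (dd:ℝ) ^ (-a) * |T dd| ≤ (dd:ℝ) ^ (-a) * ((N:ℝ)/dd + 3) :=
        mul_le_mul_of_nonneg_left (hTtriv dd hdd0) (Real.rpow_nonneg hddR.le _)
      refine h2.trans ?_
      have e : (dd:ℝ) ^ (-a) * ((N:ℝ)/dd + 3) = (N:ℝ) * (dd:ℝ) ^ (-(1+a)) + 3 * (dd:ℝ) ^ (-a) := by
        rw [show -(1+a) = (-1) + (-a) by ring, Real.rpow_add hddR, Real.rpow_neg_one]
        field_simp
      rw [e]
      refine add_le_add le_rfl (mul_le_mul_of_nonneg_left ?_ (by norm_num))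
      exact Real.rpow_le_rpow_of_nonpos hD0R (Nat.cast_le.2 hdd.1.le) (by linarith)
    refine (sum_le_sum hterm).trans ?_
    rw [sum_add_distrib, ← Finset.mul_sum, sum_const, nsmul_eq_mul]
    have hc1 : (N:ℝ) * (∑ dd ∈ Ioc D (N+3), (dd:ℝ) ^ (-(1+a))) ≤ (ε'/6) * x := by
      calc (N:ℝ) * (∑ dd ∈ Ioc D (N+3), (dd:ℝ) ^ (-(1+a)))
          ≤ (N:ℝ) * (ε'/6) := mul_le_mul_of_nonneg_left (htail (N+3)) (Nat.cast_nonneg N)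
        _ ≤ x * (ε'/6) := mul_le_mul_of_nonneg_right hNx (by positivity)
        _ = (ε'/6) * x := by ring
    have hc2 : (((Ioc D (N+3)).card : ℕ) : ℝ) * (3 * (D:ℝ) ^ (-a)) ≤ (ε'/3) * x := by
      have hcard : (((Ioc D (N+3)).card : ℕ) : ℝ) ≤ (N:ℝ) + 3 := by
        rw [Nat.card_Ioc]
        have h : N + 3 - D ≤ N + 3 := by omega
        calc ((N+3-D : ℕ):ℝ) ≤ ((N+3 : ℕ):ℝ) := by exact_mod_cast h
          _ = (N:ℝ) + 3 := by push_cast; ring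
      have hDa0 : (0:ℝ) ≤ (D:ℝ) ^ (-a) := Real.rpow_nonneg hD0R.le _
      calc (((Ioc D (N+3)).card : ℕ) : ℝ) * (3 * (D:ℝ) ^ (-a))
          ≤ ((N:ℝ)+3) * (3 * (D:ℝ) ^ (-a)) := mul_le_mul_of_nonneg_right hcard (by positivity)
        _ ≤ (2*x) * (3 * (ε'/18)) := by
            refine mul_le_mul hN3R ?_ (by positivity) (by linarith)
            exact mul_le_mul_of_nonneg_left hDa' (by norm_num)
        _ = (ε'/3) * x := by ring
    linarith
  have hfinal : |∑ dd ∈ Icc 1 (N+3), (dd:ℝ) ^ (-a) * T dd| ≤ ε' * x := by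
    calc |∑ dd ∈ Icc 1 (N+3), (dd:ℝ) ^ (-a) * T dd|
        ≤ ∑ dd ∈ Icc 1 (N+3), (dd:ℝ) ^ (-a) * |T dd| := habs
      _ = _ + _ := hsplit.symm
      _ ≤ (ε'/3) * x + ((ε'/6) * x + (ε'/3) * x) := add_le_add hp1 hp2
      _ ≤ ε' * x := by nlinarith [mul_pos hε'0 hx0]
  rw [Real.norm_eq_abs, hrw, abs_mul, abs_of_pos (by positivity : (0:ℝ) < 1/x)]
  calc (1/x) * |∑ dd ∈ Icc 1 (N+3), (dd:ℝ) ^ (-a) * T dd|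
      ≤ (1/x) * (ε' * x) := mul_le_mul_of_nonneg_left hfinal (by positivity)
    _ = ε' := by field_simp
    _ < ε := by rw [hε'def]; linarith
end
end
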